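/- Suppose c* is an optimal pushing strategy. If c*_m = 0 for some index m, then c*_i = 0 for every index i with ρ_i < ρ_m; and if c*_m = 1, then c*_j = 1 for every index j with ρ_j > ρ_m. -/

import Mathlib

/-- Exchange lemma: in an optimal strategy we cannot have `c a > 0`, `c b < 1`
with `ρ a < ρ b`, since shifting mass from `a` to `b` strictly improves. -/
lemma swap_contra (M : ℕ) (B : ℝ) (hB : 0 < B)
    (t ρ : Fin M → ℝ) (ht : ∀ i, 0 < t i)
    (c : Fin M → ℝ) (hc : ∀ i, 0 ≤ c i ∧ c i ≤ 1)
    (hopt : ∀ d : Fin M → ℝ, (∀ i, 0 ≤ d i ∧ d i ≤ 1) →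
      (∑ i, t i * (1 - d i)) * (1 - Real.exp (-B * ∑ k, t k * ρ k * d k)) ≤
      (∑ i, t i * (1 - c i)) * (1 - Real.exp (-B * ∑ k, t k * ρ k * c k)))
    (a b : Fin M) (hab : a ≠ b) (hρab : ρ a < ρ b)
    (hca : 0 < c a) (hcb : c b < 1) : False := by
  have hta := (ht a).ne'
  have htb := (ht b).ne'
  set ε : ℝ := min (t a * c a) (t b * (1 - c b)) with hεdef
  have hε : 0 < ε := lt_min (mul_pos (ht a) hca) (mul_pos (ht b) (by linarith))
  have hε1 : ε ≤ t a * c a := min_le_left _ _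
  have hε2 : ε ≤ t b * (1 - c b) := min_le_right _ _
  set d : Fin M → ℝ := fun k =>
    c k + (if k = b then ε / t b else 0) - (if k = a then ε / t a else 0) with hddef
  have hd : ∀ i, 0 ≤ d i ∧ d i ≤ 1 := by
    intro i
    by_cases hia : i = a
    · rw [hia]
      have heq : d a = c a - ε / t a := by simp [hddef, hab]
      rw [heq]
      have h1 : ε / t a ≤ c a := by
        rw [div_le_iff₀ (ht a)]
        linarith [hε1]
      have h2 : 0 ≤ ε / t a := le_of_lt (div_pos hε (ht a))
      exact ⟨by linarith, by linarith [(hc a).2]⟩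
    · by_cases hib : i = b
      · rw [hib]
        have heq : d b = c b + ε / t b := by simp [hddef, Ne.symm hab]
        rw [heq]
        have h1 : ε / t b ≤ 1 - c b := by
          rw [div_le_iff₀ (ht b)]
          linarith [hε2]
        have h2 : 0 ≤ ε / t b := le_of_lt (div_pos hε (ht b))
        exact ⟨by linarith [(hc b).1], by linarith⟩
      · have : d i = c i := by simp [hddef, hia, hib]
        rw [this]; exact hc i
  have E1 : ∑ i, t i * (1 - d i) = ∑ i, t i * (1 - c i) := by
    have h : ∀ i : Fin M, t i * (1 - d i) =
        t i * (1 - c i) + ((if i = a then ε else 0) - (if i = b then ε else 0)) := by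
      intro i
      simp only [hddef]
      by_cases hia : i = a
      · rw [hia]
        simp only [if_pos rfl, if_neg hab, ↓reduceIte]
        field_simp
        ring
      · by_cases hib : i = b
        · rw [hib]
          simp only [if_neg (Ne.symm hab), if_pos rfl, ↓reduceIte]
          field_simp
          ring
        · simp [hia, hib]
    rw [Finset.sum_congr rfl (fun i _ => h i), Finset.sum_add_distrib,
      Finset.sum_sub_distrib, Finset.sum_ite_eq' Finset.univ a (fun _ => ε),
      Finset.sum_ite_eq' Finset.univ b (fun _ => ε)]
    simp
  have E2 : ∑ k, t k * ρ k * d k = (∑ k, t k * ρ k * c k) + ε * (ρ b - ρ a) := by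
    have h : ∀ k : Fin M, t k * ρ k * d k =
        t k * ρ k * c k + ((if k = b then ε * ρ b else 0) - (if k = a then ε * ρ a else 0)) := by
      intro k
      simp only [hddef]
      by_cases hka : k = a
      · rw [hka]
        simp only [if_pos rfl, if_neg hab, ↓reduceIte]
        field_simp
        ring
      · by_cases hkb : k = b
        · rw [hkb]
          simp only [if_neg (Ne.symm hab), if_pos rfl, ↓reduceIte]
          field_simp
          ring
        · simp [hka, hkb]
    rw [Finset.sum_congr rfl (fun k _ => h k), Finset.sum_add_distrib,
      Finset.sum_sub_distrib, Finset.sum_ite_eq' Finset.univ b (fun _ => ε * ρ b),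
      Finset.sum_ite_eq' Finset.univ a (fun _ => ε * ρ a)]
    simp
    ring
  have hS : 0 < ∑ i, t i * (1 - c i) := by
    apply Finset.sum_pos'
    · intro i _
      exact mul_nonneg (ht i).le (by linarith [(hc i).2])
    · exact ⟨b, Finset.mem_univ b, mul_pos (ht b) (by linarith)⟩
  have hexp : Real.exp (-B * ((∑ k, t k * ρ k * c k) + ε * (ρ b - ρ a))) <
      Real.exp (-B * ∑ k, t k * ρ k * c k) := by
    apply Real.exp_lt_exp.mpr
    nlinarith [mul_pos (mul_pos hB hε) (sub_pos.mpr hρab)]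
  have := hopt d hd
  rw [E1, E2] at this
  nlinarith [this, hS, hexp]

/-- In an optimal pushing strategy, if `c m = 0` then every group with
smaller sharing probability also gets 0; if `c m = 1` then every group with larger
sharing probability also gets 1. -/
theorem stmt_3 (M : ℕ) (hM : 1 ≤ M) (B : ℝ) (hB : 0 < B)
    (t ρ : Fin M → ℝ) (ht : ∀ i, 0 < t i) (hρ : ∀ i, 0 < ρ i ∧ ρ i ≤ 1)
    (c : Fin M → ℝ) (hc : ∀ i, 0 ≤ c i ∧ c i ≤ 1)
    (hopt : ∀ d : Fin M → ℝ, (∀ i, 0 ≤ d i ∧ d i ≤ 1) →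
      (∑ i, t i * (1 - d i)) * (1 - Real.exp (-B * ∑ k, t k * ρ k * d k)) ≤
      (∑ i, t i * (1 - c i)) * (1 - Real.exp (-B * ∑ k, t k * ρ k * c k)))
    (m : Fin M) :
    (c m = 0 → ∀ i : Fin M, ρ i < ρ m → c i = 0) ∧
    (c m = 1 → ∀ j : Fin M, ρ m < ρ j → c j = 1) := by
  constructor
  · intro hm i hρi
    by_contra h
    have hci : 0 < c i := lt_of_le_of_ne (hc i).1 (Ne.symm h)
    have him : i ≠ m := fun he => absurd hρi (by rw [he]; exact lt_irrefl _)
    exact swap_contra M B hB t ρ ht c hc hopt i m him hρi hci (by rw [hm]; norm_num)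
  · intro hm j hρj
    by_contra h
    have hcj : c j < 1 := lt_of_le_of_ne (hc j).2 h
    have hmj : m ≠ j := fun he => absurd hρj (by rw [he]; exact lt_irrefl _)
    exact swap_contra M B hB t ρ ht c hc hopt m j hmj hρj (by rw [hm]; norm_num) hcj
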